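/- The two expressions for Owen's T function agree: for all real h and σ, (1/(2π))·(arctan σ − ∫_0^h ∫_0^{σx} e^{-(x²+y²)/2} dy dx) = (1/(2π))·∫_0^σ e^{-h²(1+x²)/2}/(1+x²) dx. -/

import Mathlib

open MeasureTheory intervalIntegral Set
open scoped Interval

lemma my_swap {f : ℝ → ℝ → ℝ} (hf : Continuous fun p : ℝ × ℝ => f p.1 p.2)
    (a b c d : ℝ) :
    (∫ x in a..b, ∫ y in c..d, f x y) = ∫ y in c..d, ∫ x in a..b, f x y := by
  have hint : Integrable (Function.uncurry f)
      ((volume.restrict (Ι a b)).prod (volume.restrict (Ι c d))) := by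
    rw [Measure.prod_restrict]
    have hK : IsCompact (uIcc a b ×ˢ uIcc c d) := isCompact_uIcc.prod isCompact_uIcc
    refine (hf.continuousOn.integrableOn_compact hK).mono_set ?_
    exact Set.prod_mono uIoc_subset_uIcc uIoc_subset_uIcc
  have key : (∫ x in Ι a b, ∫ y in Ι c d, f x y) = ∫ y in Ι c d, ∫ x in Ι a b, f x y :=
    integral_integral_swap hint
  rw [intervalIntegral_eq_integral_uIoc, intervalIntegral_eq_integral_uIoc]
  simp_rw [intervalIntegral_eq_integral_uIoc, MeasureTheory.integral_smul]
  rw [key, smul_comm]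

lemma inner_subst (σ x : ℝ) :
    (∫ y in (0:ℝ)..(σ * x), Real.exp (-(x ^ 2 + y ^ 2) / 2)) =
      ∫ t in (0:ℝ)..σ, x * Real.exp (-x ^ 2 * (1 + t ^ 2) / 2) := by
  rcases eq_or_ne x 0 with rfl | hx
  · simp
  · rw [intervalIntegral.integral_const_mul]
    have := intervalIntegral.integral_comp_mul_right
      (fun y => Real.exp (-(x ^ 2 + y ^ 2) / 2)) (a := 0) (b := σ) hx
    rw [zero_mul] at this
    rw [show (∫ t in (0:ℝ)..σ, Real.exp (-x ^ 2 * (1 + t ^ 2) / 2)) =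
        ∫ t in (0:ℝ)..σ, Real.exp (-(x ^ 2 + (t * x) ^ 2) / 2) from by
          congr 1; ext t; ring_nf]
    rw [this, smul_eq_mul, ← mul_assoc, mul_inv_cancel₀ hx, one_mul]

lemma elementary (t h : ℝ) :
    (∫ x in (0:ℝ)..h, x * Real.exp (-x ^ 2 * (1 + t ^ 2) / 2)) =
      (1 - Real.exp (-h ^ 2 * (1 + t ^ 2) / 2)) / (1 + t ^ 2) := by
  have ht : (1 : ℝ) + t ^ 2 ≠ 0 := by positivity
  have key : ∀ x : ℝ, HasDerivAt (fun x => -(Real.exp (-x ^ 2 * (1 + t ^ 2) / 2)) / (1 + t ^ 2))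
      (x * Real.exp (-x ^ 2 * (1 + t ^ 2) / 2)) x := by
    intro x
    have h1 : HasDerivAt (fun x : ℝ => -x ^ 2 * (1 + t ^ 2) / 2) (-x * (1 + t ^ 2)) x := by
      have := ((hasDerivAt_pow 2 x).neg.mul_const (1 + t ^ 2)).div_const 2
      exact this.congr_deriv (by norm_num; ring)
    have h2 := h1.exp
    have := (h2.neg).div_const (1 + t ^ 2)
    exact this.congr_deriv (by field_simp)
  rw [intervalIntegral.integral_eq_sub_of_hasDerivAt (fun x _ => key x) ?_]
  · field_simp
    ring_nf
    rw [Real.exp_zero]; ring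
  · apply Continuous.intervalIntegrable
    continuity

theorem stmt5 (h σ : ℝ) :
    (1 / (2 * Real.pi)) *
        (Real.arctan σ - ∫ x in (0:ℝ)..h, ∫ y in (0:ℝ)..(σ * x), Real.exp (-(x ^ 2 + y ^ 2) / 2)) =
      (1 / (2 * Real.pi)) * ∫ x in (0:ℝ)..σ, Real.exp (-h ^ 2 * (1 + x ^ 2) / 2) / (1 + x ^ 2) := by
  have hcont : Continuous fun p : ℝ × ℝ => p.1 * Real.exp (-p.1 ^ 2 * (1 + p.2 ^ 2) / 2) := by
    continuity
  have step1 : (∫ x in (0:ℝ)..h, ∫ y in (0:ℝ)..(σ * x), Real.exp (-(x ^ 2 + y ^ 2) / 2)) =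
      ∫ x in (0:ℝ)..h, ∫ t in (0:ℝ)..σ, x * Real.exp (-x ^ 2 * (1 + t ^ 2) / 2) := by
    congr 1; ext x; exact inner_subst σ x
  rw [step1, my_swap hcont]
  have step2 : (∫ t in (0:ℝ)..σ, ∫ x in (0:ℝ)..h, x * Real.exp (-x ^ 2 * (1 + t ^ 2) / 2)) =
      ∫ t in (0:ℝ)..σ, (1 - Real.exp (-h ^ 2 * (1 + t ^ 2) / 2)) / (1 + t ^ 2) := by
    congr 1; ext t; exact elementary t h
  rw [step2]
  have hi1 : IntervalIntegrable (fun t : ℝ => 1 / (1 + t ^ 2)) volume 0 σ := by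
    apply Continuous.intervalIntegrable
    have : ∀ t : ℝ, (1:ℝ) + t ^ 2 ≠ 0 := fun t => by positivity
    exact continuous_const.div (by continuity) this
  have hi2 : IntervalIntegrable
      (fun t : ℝ => Real.exp (-h ^ 2 * (1 + t ^ 2) / 2) / (1 + t ^ 2)) volume 0 σ := by
    apply Continuous.intervalIntegrable
    have : ∀ t : ℝ, (1:ℝ) + t ^ 2 ≠ 0 := fun t => by positivity
    exact (by continuity : Continuous fun t : ℝ => Real.exp (-h ^ 2 * (1 + t ^ 2) / 2)).div
      (by continuity) this
  have split : (∫ t in (0:ℝ)..σ, (1 - Real.exp (-h ^ 2 * (1 + t ^ 2) / 2)) / (1 + t ^ 2)) =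
      (∫ t in (0:ℝ)..σ, 1 / (1 + t ^ 2)) -
        ∫ t in (0:ℝ)..σ, Real.exp (-h ^ 2 * (1 + t ^ 2) / 2) / (1 + t ^ 2) := by
    rw [← intervalIntegral.integral_sub hi1 hi2]
    congr 1; ext t; rw [sub_div]
  rw [split, integral_one_div_one_add_sq, Real.arctan_zero, sub_zero]
  ring
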